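/- arXiv:2202.06859 — 3 statements merged into one kernel-verified Lean document; each statement's English description precedes it below -/
import Mathlib

section
/- For every real C > 27, the equation C r⁴ = (1+2r²)³ has exactly two positive solutions r₁ and r₂, satisfying 0 < r₁ < 1 < r₂. -/
open Real Set

noncomputable def auxF (r : ℝ) : ℝ := (1 + 2 * r ^ 2) ^ 3 / r ^ 4

lemma auxF_hasDerivAt {r : ℝ} (hr : r ≠ 0) :
    HasDerivAt auxF
      ((12 * r * (1 + 2 * r ^ 2) ^ 2 * r ^ 4 - (1 + 2 * r ^ 2) ^ 3 * (4 * r ^ 3)) / (r ^ 4) ^ 2)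
      r := by
  have h0 : HasDerivAt (fun r : ℝ => 1 + 2 * r ^ 2) (4 * r) r := by
    have := ((hasDerivAt_pow 2 r).const_mul 2).const_add 1
    exact this.congr_deriv (by norm_num; ring)
  have h1 : HasDerivAt (fun r : ℝ => (1 + 2 * r ^ 2) ^ 3) (12 * r * (1 + 2 * r ^ 2) ^ 2) r := by
    exact (h0.pow 3).congr_deriv (by norm_num; ring)
  have h2 : HasDerivAt (fun r : ℝ => r ^ 4) (4 * r ^ 3) r := by
    simpa using hasDerivAt_pow 4 r
  exact h1.div h2 (pow_ne_zero _ hr)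

lemma auxF_contOn {s : Set ℝ} (hs : (0:ℝ) ∉ s) : ContinuousOn auxF s := by
  intro x hx
  have hx0 : x ≠ 0 := fun h => hs (h ▸ hx)
  exact (auxF_hasDerivAt hx0).continuousAt.continuousWithinAt

lemma auxF_anti : StrictAntiOn auxF (Ioc (0:ℝ) 1) := by
  refine strictAntiOn_of_deriv_neg (convex_Ioc 0 1) (auxF_contOn (by simp)) ?_
  intro x hx
  rw [interior_Ioc] at hx
  obtain ⟨hx0, hx1⟩ := hx
  rw [(auxF_hasDerivAt (ne_of_gt hx0)).deriv]
  apply div_neg_of_neg_of_pos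
  · have h : 12 * x * (1 + 2 * x ^ 2) ^ 2 * x ^ 4 - (1 + 2 * x ^ 2) ^ 3 * (4 * x ^ 3)
        = 4 * x ^ 3 * (1 + 2 * x ^ 2) ^ 2 * (x ^ 2 - 1) := by ring
    rw [h]
    apply mul_neg_of_pos_of_neg
    · positivity
    · nlinarith
  · positivity

lemma auxF_mono : StrictMonoOn auxF (Ici (1:ℝ)) := by
  refine strictMonoOn_of_deriv_pos (convex_Ici 1) (auxF_contOn (by simp)) ?_
  intro x hx
  rw [interior_Ici] at hx
  have hx1 : (1:ℝ) < x := hx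
  have hx0 : (0:ℝ) < x := by linarith
  rw [(auxF_hasDerivAt (ne_of_gt hx0)).deriv]
  apply div_pos
  · have h : 12 * x * (1 + 2 * x ^ 2) ^ 2 * x ^ 4 - (1 + 2 * x ^ 2) ^ 3 * (4 * x ^ 3)
        = 4 * x ^ 3 * (1 + 2 * x ^ 2) ^ 2 * (x ^ 2 - 1) := by ring
    rw [h]
    apply mul_pos
    · positivity
    · nlinarith
  · positivity

lemma auxF_eq_iff {C r : ℝ} (hr : 0 < r) :
    auxF r = C ↔ C * r ^ 4 = (1 + 2 * r ^ 2) ^ 3 := by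
  unfold auxF
  rw [div_eq_iff (by positivity : r ^ 4 ≠ 0)]
  constructor <;> intro h <;> linarith

theorem two_positive_roots (C : ℝ) (hC : 27 < C) :
    ∃ r₁ r₂ : ℝ, 0 < r₁ ∧ r₁ < 1 ∧ 1 < r₂ ∧
      C * r₁ ^ 4 = (1 + 2 * r₁ ^ 2) ^ 3 ∧
      C * r₂ ^ 4 = (1 + 2 * r₂ ^ 2) ^ 3 ∧
      ∀ r : ℝ, 0 < r → C * r ^ 4 = (1 + 2 * r ^ 2) ^ 3 → r = r₁ ∨ r = r₂ := by
  have hC0 : (0:ℝ) < C := by linarith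
  have hf1 : auxF 1 = 27 := by norm_num [auxF]
  have ha : (0:ℝ) < C⁻¹ := by positivity
  have ha1 : C⁻¹ < 1 := by rw [inv_lt_one_iff₀]; right; linarith
  -- f(C⁻¹) ≥ C
  have hfa : C ≤ auxF C⁻¹ := by
    unfold auxF
    rw [le_div_iff₀ (by positivity)]
    have h1 : C * (C⁻¹) ^ 4 = (C ^ 3)⁻¹ := by field_simp
    have h2 : (C ^ 3)⁻¹ ≤ 1 := by
      rw [inv_le_one_iff₀]; right; nlinarith [sq_nonneg (C - 1), sq_nonneg C]
    nlinarith [sq_nonneg (C⁻¹), sq_nonneg (C⁻¹ ^ 2), sq_nonneg (C⁻¹ ^ 3)]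
  -- f(C) ≥ C
  have hfb : C ≤ auxF C := by
    unfold auxF
    rw [le_div_iff₀ (by positivity)]
    nlinarith [sq_nonneg C, sq_nonneg (C^2), sq_nonneg (C^3 - 1), pow_pos hC0 2, pow_pos hC0 4]
  -- existence of r₁
  obtain ⟨r₁, hr₁mem, hr₁⟩ :
      ∃ r₁ ∈ Icc (C⁻¹) 1, auxF r₁ = C := by
    have := intermediate_value_Icc' (le_of_lt ha1)
      (auxF_contOn (s := Icc (C⁻¹) 1) (fun h => absurd h.1 (not_le.mpr ha)))
    have hmem : C ∈ Icc (auxF 1) (auxF C⁻¹) := ⟨by rw [hf1]; linarith, hfa⟩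
    obtain ⟨r₁, h1, h2⟩ := this hmem
    exact ⟨r₁, h1, h2⟩
  obtain ⟨r₂, hr₂mem, hr₂⟩ :
      ∃ r₂ ∈ Icc 1 C, auxF r₂ = C := by
    have := intermediate_value_Icc (by linarith : (1:ℝ) ≤ C)
      (auxF_contOn (s := Icc 1 C) (fun h => absurd h.1 (by norm_num)))
    have hmem : C ∈ Icc (auxF 1) (auxF C) := ⟨by rw [hf1]; linarith, hfb⟩
    obtain ⟨r₂, h1, h2⟩ := this hmem
    exact ⟨r₂, h1, h2⟩
  have hr₁0 : 0 < r₁ := lt_of_lt_of_le ha hr₁mem.1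
  have hr₁1 : r₁ < 1 := by
    rcases lt_or_eq_of_le hr₁mem.2 with h | h
    · exact h
    · exfalso; rw [h, hf1] at hr₁; linarith
  have hr₂1 : 1 < r₂ := by
    rcases lt_or_eq_of_le hr₂mem.1 with h | h
    · exact h
    · exfalso; rw [← h, hf1] at hr₂; linarith
  refine ⟨r₁, r₂, hr₁0, hr₁1, hr₂1,
    (auxF_eq_iff hr₁0).mp hr₁, (auxF_eq_iff (by linarith)).mp hr₂, ?_⟩
  intro r hr0 heq
  have hfr : auxF r = C := (auxF_eq_iff hr0).mpr heq
  have hrne : r ≠ 1 := by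
    intro h; rw [h, hf1] at hfr; linarith
  rcases lt_or_gt_of_ne hrne with h | h
  · left
    exact auxF_anti.injOn (mem_Ioc.mpr ⟨hr0, le_of_lt h⟩)
      (mem_Ioc.mpr ⟨hr₁0, le_of_lt hr₁1⟩) (by rw [hfr, hr₁])
  · right
    exact auxF_mono.injOn (mem_Ici.mpr (le_of_lt h))
      (mem_Ici.mpr (le_of_lt hr₂1)) (by rw [hfr, hr₂])
end

section
/- Let q(x) = (1 − e^{2x})/(1 + 2e^{2x}) and, for a constant C, let G(x) = C e^{4x}/(1+2e^{2x})³. If f : ℝ → ℝ is twice differentiable and satisfies f''(s) = 2 q(f(s)) (f'(s)² + 1) for all s, then the function E(s) = f'(s)² − G(f(s)) + 1 satisfies E'(s) = 4 q(f(s)) f'(s) E(s) for all s. -/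
open Real

theorem energy_derivative (C : ℝ)
    (q G : ℝ → ℝ)
    (hq : ∀ x, q x = (1 - exp (2 * x)) / (1 + 2 * exp (2 * x)))
    (hG : ∀ x, G x = C * exp (4 * x) / (1 + 2 * exp (2 * x)) ^ 3)
    (f f' f'' : ℝ → ℝ)
    (hf : ∀ s, HasDerivAt f (f' s) s)
    (hf' : ∀ s, HasDerivAt f' (f'' s) s)
    (hode : ∀ s, f'' s = 2 * q (f s) * ((f' s) ^ 2 + 1))
    (E : ℝ → ℝ) (hE : ∀ s, E s = (f' s) ^ 2 - G (f s) + 1) :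
    ∀ s, HasDerivAt E (4 * q (f s) * f' s * E s) s := by
  have hden : ∀ x : ℝ, (1 + 2 * exp (2 * x)) ≠ 0 := by
    intro x
    positivity
  have hGd : ∀ x : ℝ, HasDerivAt G (4 * G x * q x) x := by
    intro x
    have hnum : HasDerivAt (fun y : ℝ => C * exp (4 * y)) (C * (exp (4 * x) * 4)) x := by
      simpa using (((hasDerivAt_id x).const_mul (4:ℝ)).exp.const_mul C)
    have hd1 : HasDerivAt (fun y : ℝ => 1 + 2 * exp (2 * y)) (2 * (exp (2 * x) * 2)) x := by
      simpa using ((((hasDerivAt_id x).const_mul (2:ℝ)).exp.const_mul 2).const_add 1)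
    have hden3 : HasDerivAt (fun y : ℝ => (1 + 2 * exp (2 * y)) ^ 3)
        (3 * (1 + 2 * exp (2 * x)) ^ 2 * (2 * (exp (2 * x) * 2))) x := by
      simpa using hd1.fun_pow 3
    have h := hnum.fun_div hden3 (pow_ne_zero 3 (hden x))
    have heq : (C * (exp (4 * x) * 4) * (1 + 2 * exp (2 * x)) ^ 3 -
        C * exp (4 * x) * (3 * (1 + 2 * exp (2 * x)) ^ 2 * (2 * (exp (2 * x) * 2)))) /
        ((1 + 2 * exp (2 * x)) ^ 3) ^ 2 = 4 * G x * q x := by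
      rw [hG, hq]
      have h4 : exp (4 * x) = exp (2 * x) * exp (2 * x) := by
        rw [← Real.exp_add]; ring_nf
      rw [h4]
      field_simp
      ring
    rw [heq] at h
    have hGfun : G = fun y : ℝ => C * exp (4 * y) / (1 + 2 * exp (2 * y)) ^ 3 := funext hG
    rw [← hGfun] at h
    exact h
  intro s
  have h1 : HasDerivAt (fun t => (f' t) ^ 2) (2 * f' s * f'' s) s := by
    simpa [mul_comm, mul_assoc, mul_left_comm] using (hf' s).fun_pow 2
  have h2 : HasDerivAt (fun t => G (f t)) (4 * G (f s) * q (f s) * f' s) s :=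
    (hGd (f s)).comp s (hf s)
  have h3 : HasDerivAt (fun t => (f' t) ^ 2 - G (f t) + 1)
      (2 * f' s * f'' s - 4 * G (f s) * q (f s) * f' s) s := (h1.sub h2).add_const 1
  have hEeq : E = fun t => (f' t) ^ 2 - G (f t) + 1 := funext hE
  rw [hEeq]
  convert h3 using 1
  simp only [hode]
  ring
end

section
/- Let q(x) = (1 − e^{2x})/(1 + 2e^{2x}) and G(x) = C e^{4x}/(1+2e^{2x})³ for a constant C. If f : ℝ → ℝ is twice differentiable, satisfies f''(s) = 2 q(f(s)) (f'(s)² + 1) for all s, and f'(0)² = G(f(0)) − 1, then f'(s)² = G(f(s)) − 1 for all s ∈ ℝ. -/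
open Real

theorem first_integral_invariant (C : ℝ)
    (q G : ℝ → ℝ)
    (hq : ∀ x, q x = (1 - exp (2 * x)) / (1 + 2 * exp (2 * x)))
    (hG : ∀ x, G x = C * exp (4 * x) / (1 + 2 * exp (2 * x)) ^ 3)
    (f f' f'' : ℝ → ℝ)
    (hf : ∀ s, HasDerivAt f (f' s) s)
    (hf' : ∀ s, HasDerivAt f' (f'' s) s)
    (hode : ∀ s, f'' s = 2 * q (f s) * ((f' s) ^ 2 + 1))
    (h0 : (f' 0) ^ 2 = G (f 0) - 1) :
    ∀ s : ℝ, (f' s) ^ 2 = G (f s) - 1 := by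
  have hDpos : ∀ x : ℝ, (0:ℝ) < 1 + 2 * exp (2 * x) := fun x => by positivity
  set A : ℝ → ℝ := fun s => 4 * f s - 3 * Real.log (1 + 2 * exp (2 * f s)) with hAdef
  -- G x = C * exp (A-expression)
  have hGA : ∀ x : ℝ, G x = C * exp (4 * x - 3 * Real.log (1 + 2 * exp (2 * x))) := by
    intro x
    have hD := hDpos x
    have h3 : (3:ℝ) * Real.log (1 + 2 * exp (2 * x))
        = Real.log ((1 + 2 * exp (2 * x)) ^ 3) := by
      rw [Real.log_pow]; push_cast; ring
    rw [hG, exp_sub, h3, Real.exp_log (by positivity)]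
    ring
  -- derivative of A ∘ (already composed with f)
  have hA : ∀ s, HasDerivAt A (4 * q (f s) * f' s) s := by
    intro s
    have d1 : HasDerivAt (fun s => 2 * f s) (2 * f' s) s := (hf s).const_mul 2
    have e1 : HasDerivAt (fun s => exp (2 * f s)) (exp (2 * f s) * (2 * f' s)) s := d1.exp
    have inner : HasDerivAt (fun s => 1 + 2 * exp (2 * f s))
        (2 * (exp (2 * f s) * (2 * f' s))) s := (e1.const_mul 2).const_add 1
    have logpart : HasDerivAt (fun s => Real.log (1 + 2 * exp (2 * f s)))
        (2 * (exp (2 * f s) * (2 * f' s)) / (1 + 2 * exp (2 * f s))) s :=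
      inner.log (ne_of_gt (hDpos (f s)))
    have : HasDerivAt A
        (4 * f' s - 3 * (2 * (exp (2 * f s) * (2 * f' s)) / (1 + 2 * exp (2 * f s)))) s :=
      ((hf s).const_mul 4).sub (logpart.const_mul 3)
    convert this using 1
    rw [hq]
    have hD := hDpos (f s)
    field_simp
    ring
  -- h is constant
  set h : ℝ → ℝ := fun s => (f' s ^ 2 + 1) * exp (-(A s)) with hhdef
  have hh : ∀ s, HasDerivAt h 0 s := by
    intro s
    have p1 : HasDerivAt (fun s => f' s ^ 2 + 1) (2 * f' s ^ 1 * f'' s) s := by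
      simpa using ((hf' s).pow 2).add_const 1
    have p2 : HasDerivAt (fun s => exp (-(A s))) (exp (-(A s)) * (-(4 * q (f s) * f' s))) s :=
      (hA s).neg.exp
    have := p1.mul p2
    refine this.congr_deriv ?_
    rw [hode s]
    ring
  have hconst : ∀ s, h s = h 0 := by
    intro s
    exact is_const_of_deriv_eq_zero (fun x => (hh x).differentiableAt)
      (fun x => (hh x).deriv) s 0
  intro s
  have h0' : f' 0 ^ 2 + 1 = C * exp (A 0) := by
    rw [h0, hGA (f 0)]; simp only [hAdef]; ring_nf
  have hs := hconst s
  have hne : exp (-(A s)) ≠ 0 := (exp_pos _).ne'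
  have hC : h 0 = C := by
    rw [hhdef]
    simp only
    rw [h0', Real.exp_neg]
    field_simp
  rw [hC] at hs
  have : f' s ^ 2 + 1 = C * exp (A s) := by
    have := hs
    rw [hhdef] at this
    simp only at this
    rw [Real.exp_neg] at this
    field_simp at this
    linarith [this]
  rw [hGA (f s)]
  have hAeq : A s = 4 * f s - 3 * Real.log (1 + 2 * exp (2 * f s)) := rfl
  rw [← hAeq]
  linarith [this]
end
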